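/- Suppose the weighted undirected graph a on n nodes is connected. In the CRR structure, X* = [X_{l1}*,…,X_{ln}*] ∈ ℝ^{r×p} is a least squares solution to AXB = F if and only if there exist Y_{vi}* ∈ ℝ^{r_i×q}, Z_i* ∈ ℝ^{r×q}, U_i* ∈ ℝ^{m×q}, W_i* ∈ ℝ^{m×q} (i = 1,…,n) such that (X*, Y*, Z*, U*, W*) is an optimal solution of problem (CRR-opt), i.e., it is feasible and attains the minimum of the objective over the feasible set. -/

import Mathlib

open Matrix

/-- Squared Frobenius norm of a real matrix: `‖M‖_F² = tr (Mᵀ M)`. -/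
noncomputable def frobSq {α β : Type*} [Fintype α] [Fintype β] (M : Matrix α β ℝ) : ℝ :=
  Matrix.trace (Mᵀ * M)

/-- Frobenius inner product of real matrices: `⟨M,N⟩_F = tr (Mᵀ N)`. -/
noncomputable def frobInner {α β : Type*} [Fintype α] [Fintype β] (M N : Matrix α β ℝ) : ℝ :=
  Matrix.trace (Mᵀ * N)

/-- The weighted undirected graph with adjacency matrix `a` is connected: any two nodes are
joined by a path of adjacent nodes (nodes `u ≠ v` are adjacent iff `a u v > 0`). -/
def GraphConnected {n : ℕ} (a : Matrix (Fin n) (Fin n) ℝ) : Prop :=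
  ∀ i j : Fin n, Relation.ReflTransGen (fun u v : Fin n => u ≠ v ∧ 0 < a u v) i j

/-- Assemble a family of row blocks `M i ∈ ℝ^{d i × β}` into one matrix. -/
def blockRows {n : ℕ} {d : Fin n → ℕ} {β : Type*} (M : ∀ i, Matrix (Fin (d i)) β ℝ) :
    Matrix ((i : Fin n) × Fin (d i)) β ℝ :=
  Matrix.of fun s j => M s.1 s.2 j

/-- Assemble a family of column blocks `M i ∈ ℝ^{α × d i}` into one matrix. -/
def blockCols {n : ℕ} {d : Fin n → ℕ} {α : Type*} (M : ∀ i, Matrix α (Fin (d i)) ℝ) :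
    Matrix α ((i : Fin n) × Fin (d i)) ℝ :=
  Matrix.of fun k s => M s.1 k s.2

/-- The `i`-th row block of a matrix whose rows are partitioned according to `d`. -/
def rowBlk {n : ℕ} {d : Fin n → ℕ} {β : Type*}
    (Y : Matrix ((i : Fin n) × Fin (d i)) β ℝ) (i : Fin n) :
    Matrix (Fin (d i)) β ℝ :=
  Matrix.of fun k j => Y ⟨i, k⟩ j

/-- `[M]_R`: the matrix whose `i`-th row block is `M` and whose other row blocks are zero. -/
def embedRow {n : ℕ} {d : Fin n → ℕ} {β : Type*} (i : Fin n)
    (M : Matrix (Fin (d i)) β ℝ) :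
    Matrix ((i' : Fin n) × Fin (d i')) β ℝ :=
  Matrix.of fun s j => if h : s.1 = i then M (Fin.cast (congrArg d h) s.2) j else 0

/-- `[M]_C`: the matrix whose `i`-th column block is `M` and whose other column blocks are zero. -/
def embedCol {n : ℕ} {d : Fin n → ℕ} {α : Type*} (i : Fin n)
    (M : Matrix α (Fin (d i)) ℝ) :
    Matrix α ((i' : Fin n) × Fin (d i')) ℝ :=
  Matrix.of fun k s => if h : s.1 = i then M k (Fin.cast (congrArg d h) s.2) else 0

/-- Feasibility for problem (CRR-opt). -/
def CRRfeas {n q : ℕ} {rdim mdim pdim : Fin n → ℕ}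
    (a : Matrix (Fin n) (Fin n) ℝ)
    (Bv : ∀ i, Matrix (Fin (pdim i)) (Fin q) ℝ)
    (Xl : ∀ i, Matrix ((i' : Fin n) × Fin (rdim i')) (Fin (pdim i)) ℝ)
    (Yv : ∀ i, Matrix (Fin (rdim i)) (Fin q) ℝ)
    (Z : Fin n → Matrix ((i : Fin n) × Fin (rdim i)) (Fin q) ℝ)
    (U W : Fin n → Matrix ((i : Fin n) × Fin (mdim i)) (Fin q) ℝ) : Prop :=
  (∀ i, embedRow i (Yv i) - Xl i * Bv i - ∑ j, a i j • (Z i - Z j) = 0) ∧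
  (∀ i, U i = ∑ j, a i j • (W i - W j))

/-- Objective of problem (CRR-opt): `Σ_i ‖A_{li} Y_{vi} − [F_{vi}]_R − U_i‖_F²`. -/
noncomputable def CRRobj {n q : ℕ} {rdim mdim : Fin n → ℕ}
    (Al : ∀ i, Matrix ((i' : Fin n) × Fin (mdim i')) (Fin (rdim i)) ℝ)
    (Fv : ∀ i, Matrix (Fin (mdim i)) (Fin q) ℝ)
    (Yv : ∀ i, Matrix (Fin (rdim i)) (Fin q) ℝ)
    (U : Fin n → Matrix ((i : Fin n) × Fin (mdim i)) (Fin q) ℝ) : ℝ :=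
  ∑ i, frobSq (Al i * Yv i - embedRow i (Fv i) - U i)

/-- Right-hand side of the `X_{li}`-equation in algorithm (CRR-alg). -/
noncomputable def CRRrhsX {n q : ℕ} {rdim pdim : Fin n → ℕ}
    (Bv : ∀ i, Matrix (Fin (pdim i)) (Fin q) ℝ)
    (L2 : Fin n → Matrix ((i : Fin n) × Fin (rdim i)) (Fin q) ℝ) (i : Fin n) :
    Matrix ((i' : Fin n) × Fin (rdim i')) (Fin (pdim i)) ℝ :=
  L2 i * (Bv i)ᵀ

/-- Right-hand side of the `Y_{vi}`-equation in algorithm (CRR-alg). -/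
noncomputable def CRRrhsY {n q : ℕ} {rdim mdim : Fin n → ℕ}
    (Al : ∀ i, Matrix ((i' : Fin n) × Fin (mdim i')) (Fin (rdim i)) ℝ)
    (Fv : ∀ i, Matrix (Fin (mdim i)) (Fin q) ℝ)
    (Yv : ∀ i, Matrix (Fin (rdim i)) (Fin q) ℝ)
    (U : Fin n → Matrix ((i : Fin n) × Fin (mdim i)) (Fin q) ℝ)
    (L2 : Fin n → Matrix ((i : Fin n) × Fin (rdim i)) (Fin q) ℝ) (i : Fin n) :
    Matrix (Fin (rdim i)) (Fin q) ℝ :=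
  -((Al i)ᵀ * (Al i * Yv i - embedRow i (Fv i) - U i)) - rowBlk (L2 i) i

/-- Right-hand side of the `U_i`-equation in algorithm (CRR-alg). -/
noncomputable def CRRrhsU {n q : ℕ} {rdim mdim : Fin n → ℕ}
    (Al : ∀ i, Matrix ((i' : Fin n) × Fin (mdim i')) (Fin (rdim i)) ℝ)
    (Fv : ∀ i, Matrix (Fin (mdim i)) (Fin q) ℝ)
    (Yv : ∀ i, Matrix (Fin (rdim i)) (Fin q) ℝ)
    (U L1 : Fin n → Matrix ((i : Fin n) × Fin (mdim i)) (Fin q) ℝ) (i : Fin n) :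
    Matrix ((i : Fin n) × Fin (mdim i)) (Fin q) ℝ :=
  Al i * Yv i - embedRow i (Fv i) - U i - L1 i

/-- Right-hand side of the `W_i`-equation in algorithm (CRR-alg). -/
noncomputable def CRRrhsW {n q : ℕ} {mdim : Fin n → ℕ}
    (a : Matrix (Fin n) (Fin n) ℝ)
    (L1 : Fin n → Matrix ((i : Fin n) × Fin (mdim i)) (Fin q) ℝ) (i : Fin n) :
    Matrix ((i : Fin n) × Fin (mdim i)) (Fin q) ℝ :=
  ∑ j, a i j • (L1 i - L1 j)

/-- Right-hand side of the `Z_i`-equation in algorithm (CRR-alg). -/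
noncomputable def CRRrhsZ {n q : ℕ} {rdim : Fin n → ℕ}
    (a : Matrix (Fin n) (Fin n) ℝ)
    (L2 : Fin n → Matrix ((i : Fin n) × Fin (rdim i)) (Fin q) ℝ) (i : Fin n) :
    Matrix ((i : Fin n) × Fin (rdim i)) (Fin q) ℝ :=
  ∑ j, a i j • (L2 i - L2 j)

/-- Right-hand side of the `Λ¹_i`-equation in algorithm (CRR-alg), with the derivative
feedback replaced by the right-hand side that determines it. -/
noncomputable def CRRrhsL1 {n q : ℕ} {rdim mdim : Fin n → ℕ}
    (a : Matrix (Fin n) (Fin n) ℝ)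
    (Al : ∀ i, Matrix ((i' : Fin n) × Fin (mdim i')) (Fin (rdim i)) ℝ)
    (Fv : ∀ i, Matrix (Fin (mdim i)) (Fin q) ℝ)
    (Yv : ∀ i, Matrix (Fin (rdim i)) (Fin q) ℝ)
    (U W L1 : Fin n → Matrix ((i : Fin n) × Fin (mdim i)) (Fin q) ℝ) (i : Fin n) :
    Matrix ((i : Fin n) × Fin (mdim i)) (Fin q) ℝ :=
  U i + CRRrhsU Al Fv Yv U L1 i - ∑ j, a i j • (W i - W j) - ∑ j, a i j • (L1 i - L1 j)

/-- Right-hand side of the `Λ²_i`-equation in algorithm (CRR-alg), with the derivative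
feedbacks replaced by the right-hand sides that determine them. -/
noncomputable def CRRrhsL2 {n q : ℕ} {rdim mdim pdim : Fin n → ℕ}
    (a : Matrix (Fin n) (Fin n) ℝ)
    (Al : ∀ i, Matrix ((i' : Fin n) × Fin (mdim i')) (Fin (rdim i)) ℝ)
    (Bv : ∀ i, Matrix (Fin (pdim i)) (Fin q) ℝ)
    (Fv : ∀ i, Matrix (Fin (mdim i)) (Fin q) ℝ)
    (Xl : ∀ i, Matrix ((i' : Fin n) × Fin (rdim i')) (Fin (pdim i)) ℝ)
    (Yv : ∀ i, Matrix (Fin (rdim i)) (Fin q) ℝ)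
    (Z : Fin n → Matrix ((i : Fin n) × Fin (rdim i)) (Fin q) ℝ)
    (U : Fin n → Matrix ((i : Fin n) × Fin (mdim i)) (Fin q) ℝ)
    (L2 : Fin n → Matrix ((i : Fin n) × Fin (rdim i)) (Fin q) ℝ) (i : Fin n) :
    Matrix ((i : Fin n) × Fin (rdim i)) (Fin q) ℝ :=
  embedRow i (Yv i) + embedRow i (CRRrhsY Al Fv Yv U L2 i) - Xl i * Bv i
    - ∑ j, a i j • (Z i - Z j) - ∑ j, a i j • (L2 i - L2 j)
    - CRRrhsX Bv L2 i * Bv i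

/-- Equilibrium of algorithm (CRR-alg): all right-hand sides vanish. -/
noncomputable def CRRequil {n q : ℕ} {rdim mdim pdim : Fin n → ℕ}
    (a : Matrix (Fin n) (Fin n) ℝ)
    (Al : ∀ i, Matrix ((i' : Fin n) × Fin (mdim i')) (Fin (rdim i)) ℝ)
    (Bv : ∀ i, Matrix (Fin (pdim i)) (Fin q) ℝ)
    (Fv : ∀ i, Matrix (Fin (mdim i)) (Fin q) ℝ)
    (Xl : ∀ i, Matrix ((i' : Fin n) × Fin (rdim i')) (Fin (pdim i)) ℝ)
    (Yv : ∀ i, Matrix (Fin (rdim i)) (Fin q) ℝ)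
    (Z : Fin n → Matrix ((i : Fin n) × Fin (rdim i)) (Fin q) ℝ)
    (U W L1 : Fin n → Matrix ((i : Fin n) × Fin (mdim i)) (Fin q) ℝ)
    (L2 : Fin n → Matrix ((i : Fin n) × Fin (rdim i)) (Fin q) ℝ) : Prop :=
  ∀ i, CRRrhsX Bv L2 i = 0 ∧ CRRrhsY Al Fv Yv U L2 i = 0 ∧
    CRRrhsU Al Fv Yv U L1 i = 0 ∧ CRRrhsW a L1 i = 0 ∧ CRRrhsZ a L2 i = 0 ∧
    CRRrhsL1 a Al Fv Yv U W L1 i = 0 ∧ CRRrhsL2 a Al Bv Fv Xl Yv Z U L2 i = 0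


section AuxCRR

variable {n : ℕ}

/- ### Basic Frobenius norm lemmas -/

lemma frobSq_eq_sum {α β : Type*} [Fintype α] [Fintype β] (M : Matrix α β ℝ) :
    frobSq M = ∑ j, ∑ k, (M k j)^2 := by
  unfold frobSq
  simp [Matrix.trace, Matrix.mul_apply, Matrix.diag, sq]

lemma frobSq_nonneg {α β : Type*} [Fintype α] [Fintype β] (M : Matrix α β ℝ) :
    0 ≤ frobSq M := by
  rw [frobSq_eq_sum]; positivity

lemma frobSq_smul {α β : Type*} [Fintype α] [Fintype β] (c : ℝ) (M : Matrix α β ℝ) :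
    frobSq (c • M) = c^2 * frobSq M := by
  simp only [frobSq_eq_sum, Matrix.smul_apply, smul_eq_mul, mul_pow, Finset.mul_sum]

lemma matrix_sum_apply {α β : Type*} (V : Fin n → Matrix α β ℝ) (k : α) (j : β) :
    (∑ i, V i) k j = ∑ i, V i k j := by
  induction (Finset.univ : Finset (Fin n)) using Finset.induction with
  | empty => simp
  | insert _ _ h ih => simp [Finset.sum_insert h, ih, Matrix.add_apply]

lemma frobSq_sum_le {α β : Type*} [Fintype α] [Fintype β]
    (V : Fin n → Matrix α β ℝ) :
    frobSq (∑ i, V i) ≤ n * ∑ i, frobSq (V i) := by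
  simp only [frobSq_eq_sum]
  have key : ∀ (j : β) (k : α), ((∑ i, V i) k j)^2 ≤ (n:ℝ) * ∑ i, (V i k j)^2 := by
    intro j k
    rw [matrix_sum_apply]
    have h := sq_sum_le_card_mul_sum_sq (s := (Finset.univ : Finset (Fin n)))
      (f := fun i => V i k j)
    simpa using h
  calc ∑ j, ∑ k, ((∑ i, V i) k j)^2
      ≤ ∑ j : β, ∑ k : α, (n : ℝ) * ∑ i, (V i k j)^2 :=
        Finset.sum_le_sum fun j _ => Finset.sum_le_sum fun k _ => key j k
    _ = (n:ℝ) * ∑ i, ∑ j, ∑ k, (V i k j)^2 := by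
        simp only [← Finset.mul_sum]
        congr 1
        have h1 : ∀ j : β, (∑ k : α, ∑ i : Fin n, (V i k j)^2)
            = ∑ i : Fin n, ∑ k : α, (V i k j)^2 := fun j =>
          Finset.sum_comm (s := Finset.univ) (t := Finset.univ)
            (f := fun k i => (V i k j)^2)
        simp only [h1]
        exact Finset.sum_comm (s := Finset.univ) (t := Finset.univ)
          (f := fun j i => ∑ k : α, (V i k j)^2)

/- ### Graph Laplacian surjectivity -/

/-- The graph Laplacian as a linear map on `Fin n → ℝ`. -/
def lapL (a : Matrix (Fin n) (Fin n) ℝ) : (Fin n → ℝ) →ₗ[ℝ] (Fin n → ℝ) where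
  toFun z := fun i => ∑ j, a i j * (z i - z j)
  map_add' x y := by
    funext i
    rw [Pi.add_apply, Pi.add_apply, ← Finset.sum_add_distrib]
    exact Finset.sum_congr rfl fun j _ => by simp [Pi.add_apply]; ring
  map_smul' c x := by
    funext i
    simp only [Pi.smul_apply, smul_eq_mul, RingHom.id_apply, Finset.mul_sum]
    exact Finset.sum_congr rfl fun j _ => by ring

lemma lapL_apply (a : Matrix (Fin n) (Fin n) ℝ) (z : Fin n → ℝ) (i : Fin n) :
    lapL a z i = ∑ j, a i j * (z i - z j) := rfl

/-- Sum functional. -/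
def sumF : (Fin n → ℝ) →ₗ[ℝ] ℝ where
  toFun z := ∑ i, z i
  map_add' x y := by simp [Finset.sum_add_distrib]
  map_smul' c x := by simp [Finset.mul_sum]

lemma swap_sum (f : Fin n → Fin n → ℝ) :
    ∑ i, ∑ j, f i j = ∑ i, ∑ j, f j i :=
  Finset.sum_comm (s := Finset.univ) (t := Finset.univ) (f := f)

lemma range_lapL_le (a : Matrix (Fin n) (Fin n) ℝ) (hsym : ∀ i j, a i j = a j i) :
    LinearMap.range (lapL a) ≤ LinearMap.ker (sumF (n := n)) := by
  rintro _ ⟨z, rfl⟩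
  simp only [LinearMap.mem_ker, sumF, LinearMap.coe_mk, AddHom.coe_mk, lapL_apply]
  have h1 : ∑ i, ∑ j, a i j * (z i - z j) = ∑ i, ∑ j, a j i * (z j - z i) :=
    swap_sum _
  have h2 : ∑ i, ∑ j, a j i * (z j - z i) = - ∑ i, ∑ j, a i j * (z i - z j) := by
    rw [← Finset.sum_neg_distrib]
    exact Finset.sum_congr rfl fun i _ => by
      rw [← Finset.sum_neg_distrib]
      exact Finset.sum_congr rfl fun j _ => by rw [hsym i j]; ring
  have := h1.trans h2
  linarith

lemma ker_lapL_const (a : Matrix (Fin n) (Fin n) ℝ) (hsym : ∀ i j, a i j = a j i)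
    (hnonneg : ∀ i j, 0 ≤ a i j) (hconn : GraphConnected a)
    (z : Fin n → ℝ) (hz : lapL a z = 0) (i j : Fin n) : z i = z j := by
  have hq : ∑ i, z i * lapL a z i = 0 := by
    rw [hz]; simp
  have hT : ∑ i, ∑ j, a i j * z i * (z i - z j)
      = ∑ i, z i * lapL a z i := by
    refine Finset.sum_congr rfl fun i _ => ?_
    rw [lapL_apply, Finset.mul_sum]
    exact Finset.sum_congr rfl fun j _ => by ring
  have hswap : ∑ i, ∑ j, a i j * z j * (z i - z j)
      = - ∑ i, ∑ j, a i j * z i * (z i - z j) := by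
    rw [swap_sum (fun i j => a i j * z j * (z i - z j)), ← Finset.sum_neg_distrib]
    refine Finset.sum_congr rfl fun i _ => ?_
    rw [← Finset.sum_neg_distrib]
    exact Finset.sum_congr rfl fun j _ => by rw [hsym j i]; ring
  have hS : ∑ i, ∑ j, a i j * (z i - z j)^2 = 0 := by
    have expand : ∑ i, ∑ j, a i j * (z i - z j)^2
        = ∑ i, ∑ j, a i j * z i * (z i - z j)
          - ∑ i, ∑ j, a i j * z j * (z i - z j) := by
      rw [← Finset.sum_sub_distrib]
      refine Finset.sum_congr rfl fun i _ => ?_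
      rw [← Finset.sum_sub_distrib]
      exact Finset.sum_congr rfl fun j _ => by ring
    rw [expand, hswap, hT, hq]; ring
  have hterm : ∀ i j : Fin n, a i j * (z i - z j)^2 = 0 := by
    have h1 : ∀ i ∈ Finset.univ, (0:ℝ) ≤ ∑ j, a i j * (z i - z j)^2 := fun i _ =>
      Finset.sum_nonneg fun j _ => mul_nonneg (hnonneg i j) (sq_nonneg _)
    have h2 := (Finset.sum_eq_zero_iff_of_nonneg h1).mp hS
    intro i j
    have h3 : ∀ j ∈ Finset.univ, (0:ℝ) ≤ a i j * (z i - z j)^2 := fun j _ =>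
      mul_nonneg (hnonneg i j) (sq_nonneg _)
    exact (Finset.sum_eq_zero_iff_of_nonneg h3).mp (h2 i (Finset.mem_univ i)) j
      (Finset.mem_univ j)
  have hedge : ∀ u v : Fin n, 0 < a u v → z u = z v := by
    intro u v huv
    have := hterm u v
    have h4 : (z u - z v)^2 = 0 := by
      rcases mul_eq_zero.mp this with h | h
      · exact absurd h (ne_of_gt huv)
      · exact h
    have := pow_eq_zero_iff (n := 2) (by norm_num) |>.mp h4
    linarith
  have hpath := hconn i j
  induction hpath with
  | refl => rfl
  | tail _ hbc ih => exact ih.trans (hedge _ _ hbc.2)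

lemma lap_surj (hn : 0 < n) (a : Matrix (Fin n) (Fin n) ℝ)
    (hsym : ∀ i j, a i j = a j i) (hnonneg : ∀ i j, 0 ≤ a i j)
    (hconn : GraphConnected a) (v : Fin n → ℝ) (hv : ∑ i, v i = 0) :
    ∃ z : Fin n → ℝ, ∀ i, ∑ j, a i j * (z i - z j) = v i := by
  have i0 : Fin n := ⟨0, hn⟩
  have hker : LinearMap.ker (lapL a) = Submodule.span ℝ {(fun _ => (1:ℝ) : Fin n → ℝ)} := by
    apply le_antisymm
    · intro z hz
      have hconst := ker_lapL_const a hsym hnonneg hconn z (LinearMap.mem_ker.mp hz)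
      have : z = z i0 • (fun _ => (1:ℝ)) := by
        funext i; simp [hconst i0 i]
      rw [this]
      exact Submodule.smul_mem _ _ (Submodule.mem_span_singleton_self _)
    · rw [Submodule.span_le, Set.singleton_subset_iff]
      simp only [SetLike.mem_coe, LinearMap.mem_ker]
      funext i
      simp [lapL_apply]
  have hone_ne : (fun _ => (1:ℝ) : Fin n → ℝ) ≠ 0 := by
    intro h
    have := congrFun h i0
    simp at this
  have hker_rank : Module.finrank ℝ (LinearMap.ker (lapL a)) = 1 := by
    rw [hker]
    exact finrank_span_singleton hone_ne
  have hsum_surj : LinearMap.range (sumF (n := n)) = ⊤ := by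
    rw [LinearMap.range_eq_top]
    intro c
    refine ⟨fun i => if i = i0 then c else 0, ?_⟩
    simp [sumF, Finset.sum_ite_eq']
  have hS_rank : Module.finrank ℝ (LinearMap.ker (sumF (n := n))) = n - 1 := by
    have h1 := LinearMap.finrank_range_add_finrank_ker (sumF (n := n))
    rw [hsum_surj] at h1
    have h2 : Module.finrank ℝ (⊤ : Submodule ℝ ℝ) = 1 := by simp
    have h3 : Module.finrank ℝ (Fin n → ℝ) = n := by simp
    omega
  have hR_rank : Module.finrank ℝ (LinearMap.range (lapL a)) = n - 1 := by
    have h1 := LinearMap.finrank_range_add_finrank_ker (lapL a)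
    have h3 : Module.finrank ℝ (Fin n → ℝ) = n := by simp
    omega
  have heq : LinearMap.range (lapL a) = LinearMap.ker (sumF (n := n)) := by
    apply Submodule.eq_of_le_of_finrank_le (range_lapL_le a hsym)
    omega
  have hvmem : v ∈ LinearMap.ker (sumF (n := n)) := by
    simp only [LinearMap.mem_ker, sumF, LinearMap.coe_mk, AddHom.coe_mk]
    exact hv
  rw [← heq] at hvmem
  obtain ⟨z, hz⟩ := hvmem
  exact ⟨z, fun i => congrFun hz i⟩

lemma lap_surj_mat {α β : Type*} [Fintype α] [Fintype β]
    (hn : 0 < n) (a : Matrix (Fin n) (Fin n) ℝ)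
    (hsym : ∀ i j, a i j = a j i) (hnonneg : ∀ i j, 0 ≤ a i j)
    (hconn : GraphConnected a) (D : Fin n → Matrix α β ℝ)
    (hD : ∑ i, D i = 0) :
    ∃ Z : Fin n → Matrix α β ℝ, ∀ i, ∑ j, a i j • (Z i - Z j) = D i := by
  have hent : ∀ (k : α) (l : β), ∑ i, D i k l = 0 := by
    intro k l
    rw [← matrix_sum_apply, hD]
    rfl
  choose z hz using fun (k : α) (l : β) =>
    lap_surj hn a hsym hnonneg hconn (fun i => D i k l) (hent k l)
  refine ⟨fun i => Matrix.of fun k l => z k l i, fun i => ?_⟩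
  ext k l
  rw [matrix_sum_apply]
  have : ∀ j : Fin n, (a i j • ((fun i => Matrix.of fun k l => z k l i) i
      - (fun i => Matrix.of fun k l => z k l i) j)) k l
      = a i j * (z k l i - z k l j) := fun j => rfl
  simp only [this]
  exact hz k l i

lemma sum_lap_zero_mat {α β : Type*} (a : Matrix (Fin n) (Fin n) ℝ)
    (hsym : ∀ i j, a i j = a j i) (Z : Fin n → Matrix α β ℝ) :
    ∑ i, ∑ j, a i j • (Z i - Z j) = 0 := by
  ext k l
  rw [matrix_sum_apply]
  have h1 : ∀ i : Fin n, (∑ j, a i j • (Z i - Z j)) k l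
      = ∑ j, a i j * (Z i k l - Z j k l) := by
    intro i
    rw [matrix_sum_apply]
    rfl
  simp only [h1]
  have h2 : ∑ i, ∑ j, a i j * (Z i k l - Z j k l)
      = ∑ i, ∑ j, a j i * (Z j k l - Z i k l) := swap_sum _
  have h3 : ∑ i, ∑ j, a j i * (Z j k l - Z i k l)
      = - ∑ i, ∑ j, a i j * (Z i k l - Z j k l) := by
    rw [← Finset.sum_neg_distrib]
    refine Finset.sum_congr rfl fun i _ => ?_
    rw [← Finset.sum_neg_distrib]
    exact Finset.sum_congr rfl fun j _ => by rw [hsym i j]; ring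
  have := h2.trans h3
  have h0 : ∑ i, ∑ j, a i j * (Z i k l - Z j k l) = 0 := by linarith
  rw [h0]
  rfl

/- ### Block matrix lemmas -/

lemma sigma_sum {d : Fin n → ℕ} {M : Type*} [AddCommMonoid M]
    (f : ((i : Fin n) × Fin (d i)) → M) :
    ∑ s : (i : Fin n) × Fin (d i), f s = ∑ i, ∑ k : Fin (d i), f ⟨i, k⟩ := by
  rw [← Finset.univ_sigma_univ, Finset.sum_sigma]

lemma embedRow_apply_self {d : Fin n → ℕ} {β : Type*} (i : Fin n)
    (M : Matrix (Fin (d i)) β ℝ) (k : Fin (d i)) (j : β) :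
    embedRow i M ⟨i, k⟩ j = M k j := by
  simp [embedRow]

lemma embedRow_apply_ne {d : Fin n → ℕ} {β : Type*} (i i' : Fin n) (hne : i' ≠ i)
    (M : Matrix (Fin (d i)) β ℝ) (k : Fin (d i')) (j : β) :
    embedRow i M ⟨i', k⟩ j = 0 := by
  simp [embedRow, hne]

lemma mul_embedRow {d e : Fin n → ℕ} {β : Type*} [Fintype β]
    (Al : ∀ i, Matrix ((i' : Fin n) × Fin (e i')) (Fin (d i)) ℝ) (i : Fin n)
    (M : Matrix (Fin (d i)) β ℝ) :
    blockCols Al * embedRow i M = Al i * M := by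
  ext k j
  rw [Matrix.mul_apply, Matrix.mul_apply, sigma_sum]
  rw [Finset.sum_eq_single_of_mem i (Finset.mem_univ i)]
  · exact Finset.sum_congr rfl fun t _ => by
      rw [embedRow_apply_self]; rfl
  · intro i' _ hne
    apply Finset.sum_eq_zero
    intro t _
    rw [embedRow_apply_ne i i' hne]
    exact mul_zero _

lemma sum_embedRow_rowBlk {d : Fin n → ℕ} {β : Type*}
    (Y : Matrix ((i : Fin n) × Fin (d i)) β ℝ) :
    ∑ i, embedRow i (rowBlk Y i) = Y := by
  ext ⟨i', k⟩ j
  rw [matrix_sum_apply]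
  rw [Finset.sum_eq_single_of_mem i' (Finset.mem_univ i')]
  · rw [embedRow_apply_self]; rfl
  · intro i _ hne
    exact embedRow_apply_ne i i' (fun h => hne h.symm) _ k j

lemma blockRows_eq_sum {d : Fin n → ℕ} {β : Type*}
    (Fv : ∀ i, Matrix (Fin (d i)) β ℝ) :
    blockRows Fv = ∑ i, embedRow i (Fv i) := by
  have : blockRows Fv = ∑ i, embedRow i (rowBlk (blockRows Fv) i) :=
    (sum_embedRow_rowBlk _).symm
  rw [this]
  exact Finset.sum_congr rfl fun i _ => rfl

lemma blockCols_mul_blockRows {d : Fin n → ℕ} {α β : Type*} [Fintype β]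
    (Xl : ∀ i, Matrix α (Fin (d i)) ℝ) (Bv : ∀ i, Matrix (Fin (d i)) β ℝ) :
    blockCols Xl * blockRows Bv = ∑ i, Xl i * Bv i := by
  ext k j
  rw [Matrix.mul_apply, matrix_sum_apply, sigma_sum]
  exact Finset.sum_congr rfl fun i _ => by rw [Matrix.mul_apply]; rfl

/- ### Key lemmas about the CRR problem -/

section Main

variable {q : ℕ} {rdim mdim pdim : Fin n → ℕ}
  (a : Matrix (Fin n) (Fin n) ℝ)
  (Al : ∀ i, Matrix ((i' : Fin n) × Fin (mdim i')) (Fin (rdim i)) ℝ)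
  (Bv : ∀ i, Matrix (Fin (pdim i)) (Fin q) ℝ)
  (Fv : ∀ i, Matrix (Fin (mdim i)) (Fin q) ℝ)

/-- For a feasible point, the residual sum equals the global residual. -/
lemma feas_sum (hsym : ∀ i j, a i j = a j i)
    (Xl : ∀ i, Matrix ((i' : Fin n) × Fin (rdim i')) (Fin (pdim i)) ℝ)
    (Yv : ∀ i, Matrix (Fin (rdim i)) (Fin q) ℝ)
    (Z : Fin n → Matrix ((i : Fin n) × Fin (rdim i)) (Fin q) ℝ)
    (U W : Fin n → Matrix ((i : Fin n) × Fin (mdim i)) (Fin q) ℝ)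
    (hfeas : CRRfeas a Bv Xl Yv Z U W) :
    ∑ i, (Al i * Yv i - embedRow i (Fv i) - U i)
      = blockCols Al * blockCols Xl * blockRows Bv - blockRows Fv := by
  obtain ⟨h1, h2⟩ := hfeas
  have hY : ∀ i, embedRow i (Yv i) = Xl i * Bv i + ∑ j, a i j • (Z i - Z j) := by
    intro i
    have h := h1 i
    have h' : embedRow i (Yv i) - (Xl i * Bv i + ∑ j, a i j • (Z i - Z j)) = 0 := by
      rw [← h]; abel
    exact sub_eq_zero.mp h'
  have hsumY : ∑ i, embedRow i (Yv i) = blockCols Xl * blockRows Bv := by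
    rw [blockCols_mul_blockRows]
    calc ∑ i, embedRow i (Yv i)
        = ∑ i, (Xl i * Bv i + ∑ j, a i j • (Z i - Z j)) :=
          Finset.sum_congr rfl fun i _ => hY i
      _ = (∑ i, Xl i * Bv i) + ∑ i, ∑ j, a i j • (Z i - Z j) :=
          Finset.sum_add_distrib
      _ = ∑ i, Xl i * Bv i := by rw [sum_lap_zero_mat a hsym Z, add_zero]
  have hsumU : ∑ i, U i = 0 := by
    calc ∑ i, U i = ∑ i, ∑ j, a i j • (W i - W j) :=
          Finset.sum_congr rfl fun i _ => h2 i
      _ = 0 := sum_lap_zero_mat a hsym W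
  have hAY : ∑ i, Al i * Yv i = blockCols Al * blockCols Xl * blockRows Bv := by
    calc ∑ i, Al i * Yv i = ∑ i, blockCols Al * embedRow i (Yv i) :=
          Finset.sum_congr rfl fun i _ => (mul_embedRow Al i (Yv i)).symm
      _ = blockCols Al * ∑ i, embedRow i (Yv i) := (Matrix.mul_sum _ _ _).symm
      _ = blockCols Al * (blockCols Xl * blockRows Bv) := by rw [hsumY]
      _ = blockCols Al * blockCols Xl * blockRows Bv := (Matrix.mul_assoc _ _ _).symm
  calc ∑ i, (Al i * Yv i - embedRow i (Fv i) - U i)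
      = (∑ i, Al i * Yv i) - (∑ i, embedRow i (Fv i)) - ∑ i, U i := by
        rw [← Finset.sum_sub_distrib, ← Finset.sum_sub_distrib]
    _ = blockCols Al * blockCols Xl * blockRows Bv - blockRows Fv := by
        rw [hAY, hsumU, sub_zero, blockRows_eq_sum Fv]

/-- Lower bound for the objective at any feasible point. -/
lemma obj_lower_bound (hsym : ∀ i j, a i j = a j i)
    (Xl : ∀ i, Matrix ((i' : Fin n) × Fin (rdim i')) (Fin (pdim i)) ℝ)
    (Yv : ∀ i, Matrix (Fin (rdim i)) (Fin q) ℝ)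
    (Z : Fin n → Matrix ((i : Fin n) × Fin (rdim i)) (Fin q) ℝ)
    (U W : Fin n → Matrix ((i : Fin n) × Fin (mdim i)) (Fin q) ℝ)
    (hfeas : CRRfeas a Bv Xl Yv Z U W) :
    frobSq (blockCols Al * blockCols Xl * blockRows Bv - blockRows Fv)
      ≤ n * CRRobj Al Fv Yv U := by
  rw [← feas_sum a Al Bv Fv hsym Xl Yv Z U W hfeas]
  exact frobSq_sum_le _

/-- Construction of a feasible point attaining `(1/n)` of the global residual. -/
lemma opt_point (hn : 0 < n) (hsym : ∀ i j, a i j = a j i)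
    (hnonneg : ∀ i j, 0 ≤ a i j) (hconn : GraphConnected a)
    (Xl : ∀ i, Matrix ((i' : Fin n) × Fin (rdim i')) (Fin (pdim i)) ℝ) :
    ∃ Yv : ∀ i, Matrix (Fin (rdim i)) (Fin q) ℝ,
    ∃ Z : Fin n → Matrix ((i : Fin n) × Fin (rdim i)) (Fin q) ℝ,
    ∃ U W : Fin n → Matrix ((i : Fin n) × Fin (mdim i)) (Fin q) ℝ,
      CRRfeas a Bv Xl Yv Z U W ∧
      (n : ℝ) * CRRobj Al Fv Yv U
        = frobSq (blockCols Al * blockCols Xl * blockRows Bv - blockRows Fv) := by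
  have hnR : (0:ℝ) < n := Nat.cast_pos.mpr hn
  set XB := blockCols Xl * blockRows Bv with hXB
  set Yv : ∀ i, Matrix (Fin (rdim i)) (Fin q) ℝ := fun i => rowBlk XB i with hYv
  -- Z exists by Laplacian surjectivity
  have hDsum : ∑ i, (embedRow i (Yv i) - Xl i * Bv i) = 0 := by
    rw [Finset.sum_sub_distrib, sum_embedRow_rowBlk, ← blockCols_mul_blockRows, sub_self]
  obtain ⟨Z, hZ⟩ := lap_surj_mat hn a hsym hnonneg hconn _ hDsum
  -- residual blocks and U
  set M : Fin n → Matrix ((i : Fin n) × Fin (mdim i)) (Fin q) ℝ :=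
    fun i => Al i * Yv i - embedRow i (Fv i) with hM
  set G := blockCols Al * blockCols Xl * blockRows Bv - blockRows Fv with hG
  have hsumM : ∑ i, M i = G := by
    rw [hM, hG, Finset.sum_sub_distrib, ← blockRows_eq_sum]
    congr 1
    calc ∑ i, Al i * Yv i = ∑ i, blockCols Al * embedRow i (Yv i) :=
          Finset.sum_congr rfl fun i _ => (mul_embedRow Al i (Yv i)).symm
      _ = blockCols Al * ∑ i, embedRow i (Yv i) := (Matrix.mul_sum _ _ _).symm
      _ = blockCols Al * XB := by rw [hYv, sum_embedRow_rowBlk]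
      _ = blockCols Al * blockCols Xl * blockRows Bv := by
          rw [hXB, Matrix.mul_assoc]
  set U : Fin n → Matrix ((i : Fin n) × Fin (mdim i)) (Fin q) ℝ :=
    fun i => M i - ((n:ℝ)⁻¹) • G with hU
  have hsumU : ∑ i, U i = 0 := by
    rw [hU]
    rw [Finset.sum_sub_distrib, hsumM, Finset.sum_const, Finset.card_univ,
      Fintype.card_fin, ← Nat.cast_smul_eq_nsmul ℝ, smul_smul]
    rw [mul_inv_cancel₀ (ne_of_gt hnR), one_smul, sub_self]
  obtain ⟨W, hW⟩ := lap_surj_mat hn a hsym hnonneg hconn U hsumU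
  refine ⟨Yv, Z, U, W, ⟨fun i => ?_, fun i => (hW i).symm⟩, ?_⟩
  · rw [hZ i]
    abel
  · have hobj : CRRobj Al Fv Yv U = ∑ i : Fin n, ((n:ℝ)⁻¹)^2 * frobSq G := by
      unfold CRRobj
      refine Finset.sum_congr rfl fun i _ => ?_
      have : Al i * Yv i - embedRow i (Fv i) - U i = ((n:ℝ)⁻¹) • G := by
        show M i - U i = ((n:ℝ)⁻¹) • G
        simp only [hU]
        abel
      rw [this, frobSq_smul]
    rw [hobj, Finset.sum_const, Finset.card_univ, Fintype.card_fin, nsmul_eq_mul]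
    field_simp

end Main

end AuxCRR

theorem stmt_15 (n q : ℕ) (hn : 0 < n) (rdim mdim pdim : Fin n → ℕ)
    (a : Matrix (Fin n) (Fin n) ℝ)
    (hsym : ∀ i j, a i j = a j i) (hnonneg : ∀ i j, 0 ≤ a i j)
    (hdiag : ∀ i, a i i = 0) (hconn : GraphConnected a)
    (Al : ∀ i, Matrix ((i' : Fin n) × Fin (mdim i')) (Fin (rdim i)) ℝ)
    (Bv : ∀ i, Matrix (Fin (pdim i)) (Fin q) ℝ)
    (Fv : ∀ i, Matrix (Fin (mdim i)) (Fin q) ℝ)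
    (Xl : ∀ i, Matrix ((i' : Fin n) × Fin (rdim i')) (Fin (pdim i)) ℝ) :
    (∀ X' : Matrix ((i : Fin n) × Fin (rdim i)) ((i : Fin n) × Fin (pdim i)) ℝ,
        frobSq (blockCols Al * blockCols Xl * blockRows Bv - blockRows Fv) ≤
          frobSq (blockCols Al * X' * blockRows Bv - blockRows Fv)) ↔
      (∃ Yv : ∀ i, Matrix (Fin (rdim i)) (Fin q) ℝ,
        ∃ Z : Fin n → Matrix ((i : Fin n) × Fin (rdim i)) (Fin q) ℝ,
          ∃ U W : Fin n → Matrix ((i : Fin n) × Fin (mdim i)) (Fin q) ℝ,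
            CRRfeas a Bv Xl Yv Z U W ∧
              ∀ Xl' : ∀ i, Matrix ((i' : Fin n) × Fin (rdim i')) (Fin (pdim i)) ℝ,
                ∀ Yv' : ∀ i, Matrix (Fin (rdim i)) (Fin q) ℝ,
                  ∀ Z' : Fin n → Matrix ((i : Fin n) × Fin (rdim i)) (Fin q) ℝ,
                    ∀ U' W' : Fin n → Matrix ((i : Fin n) × Fin (mdim i)) (Fin q) ℝ,
                      CRRfeas a Bv Xl' Yv' Z' U' W' →
                        CRRobj Al Fv Yv U ≤ CRRobj Al Fv Yv' U') := by
  have hnR : (0:ℝ) < n := Nat.cast_pos.mpr hn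
  constructor
  · -- least squares solution → optimal point of CRR-opt
    intro hls
    obtain ⟨Yv, Z, U, W, hfeas, hval⟩ :=
      opt_point a Al Bv Fv hn hsym hnonneg hconn Xl
    refine ⟨Yv, Z, U, W, hfeas, ?_⟩
    intro Xl' Yv' Z' U' W' hfeas'
    have hlow := obj_lower_bound a Al Bv Fv hsym Xl' Yv' Z' U' W' hfeas'
    have hcmp := hls (blockCols Xl')
    nlinarith [hval, hlow, hcmp]
  · -- optimal point of CRR-opt → least squares solution
    rintro ⟨Yv, Z, U, W, hfeas, hopt⟩ X'
    -- decompose X' into column blocks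
    set Xl' : ∀ i, Matrix ((i' : Fin n) × Fin (rdim i')) (Fin (pdim i)) ℝ :=
      fun i => Matrix.of fun k t => X' k ⟨i, t⟩ with hXl'
    have hXeq : blockCols Xl' = X' := by
      ext k s
      rfl
    obtain ⟨Yv'', Z'', U'', W'', hfeas'', hval''⟩ :=
      opt_point a Al Bv Fv hn hsym hnonneg hconn Xl'
    have h1 := obj_lower_bound a Al Bv Fv hsym Xl Yv Z U W hfeas
    have h2 := hopt Xl' Yv'' Z'' U'' W'' hfeas''
    rw [hXeq] at hval''
    nlinarith [h1, h2, hval'']
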